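/- For p ∈ [0, 1/2], the noisy PR box with parameter p admits a local hidden variable decomposition with a four-valued hidden variable: P(ab|xy) = (1/4) Σ_{λ=1}^{4} P_λ(a|x) Q_λ(b|y), where the Q_λ are the four deterministic Bob strategies b = 0, b = y, b = y⊕1, b = 1 respectively, and the P_λ are specific valid (nonnegative, normalized) nondeterministic Alice strategies depending on p. -/

import Mathlib

open Finset Real

noncomputable section

/-- A two-input two-output box: `P a b x y` is the probability of outputs `a, b`
given inputs `x, y`. -/
abbrev Box := Fin 2 → Fin 2 → Fin 2 → Fin 2 → ℝ

/-- The correlator `⟨A_x B_y⟩`. -/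
def corr (P : Box) (x y : Fin 2) : ℝ :=
  ∑ a : Fin 2, ∑ b : Fin 2, (-1 : ℝ) ^ ((a : ℕ) + (b : ℕ)) * P a b x y

/-- Alice's marginal expectation `⟨A_x⟩` (computed with Bob's input `y`). -/
def margA (P : Box) (x y : Fin 2) : ℝ :=
  ∑ a : Fin 2, ∑ b : Fin 2, (-1 : ℝ) ^ ((a : ℕ)) * P a b x y

/-- Bob's marginal expectation `⟨B_y⟩` (computed with Alice's input `x`). -/
def margB (P : Box) (x y : Fin 2) : ℝ :=
  ∑ a : Fin 2, ∑ b : Fin 2, (-1 : ℝ) ^ ((b : ℕ)) * P a b x y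

/-- The absolute CHSH expression `B_{2α+β}`. -/
def bell (P : Box) (α β : Fin 2) : ℝ :=
  |corr P 0 0 + (-1 : ℝ) ^ (β : ℕ) * corr P 0 1 + (-1 : ℝ) ^ (α : ℕ) * corr P 1 0
    + (-1 : ℝ) ^ ((α : ℕ) + (β : ℕ) + 1) * corr P 1 1|

/-- Bell strength `Γ`. -/
def gammaStrength (P : Box) : ℝ :=
  min (|(|bell P 0 0 - bell P 0 1|) - (|bell P 1 0 - bell P 1 1|)|)
    (min (|(|bell P 0 0 - bell P 1 0|) - (|bell P 0 1 - bell P 1 1|)|)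
      (|(|bell P 0 0 - bell P 1 1|) - (|bell P 0 1 - bell P 1 0|)|))

/-- Valid box: nonnegative and normalized. -/
def IsBox (P : Box) : Prop :=
  (∀ a b x y, 0 ≤ P a b x y) ∧ ∀ x y, ∑ a : Fin 2, ∑ b : Fin 2, P a b x y = 1

/-- Nonsignaling condition. -/
def NonSignaling (P : Box) : Prop :=
  (∀ a x y y', ∑ b : Fin 2, P a b x y = ∑ b : Fin 2, P a b x y') ∧
  (∀ b x x' y, ∑ a : Fin 2, P a b x y = ∑ a : Fin 2, P a b x' y)

/-- The noisy PR box `p·P_PR + (1-p)·P_N`. -/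
def noisyPR (p : ℝ) : Box := fun a b x y =>
  (1 + (-1 : ℝ) ^ ((a : ℕ) + (b : ℕ) + (x : ℕ) * (y : ℕ)) * p) / 4

/-- The PR box `P_PR^{αβγ}` (addition/multiplication in `Fin 2` is mod 2). -/
def PRbox (α β γ : Fin 2) : Box := fun a b x y =>
  if a + b = x * y + α * x + β * y + γ then 1 / 2 else 0

/-- The local deterministic box `P_D^{αβγε}`. -/
def detBox (α β γ ε : Fin 2) : Box := fun a b x y =>
  if a = α * x + β ∧ b = γ * y + ε then 1 else 0

/-- Single-party deterministic response `P_D^{αβ}(a|x)`. -/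
def det1 (α β a x : Fin 2) : ℝ := if a = α * x + β then 1 else 0

/-- Alice's four nondeterministic strategies. -/
def aliceStrat (p : ℝ) (l : Fin 4) (a x : Fin 2) : ℝ :=
  if l = 0 then (det1 0 0 a x + 2 * p * det1 1 0 a x + (1 - 2 * p) * det1 0 1 a x) / 2
  else if l = 1 then (det1 0 0 a x + 2 * p * det1 1 1 a x + (1 - 2 * p) * det1 0 1 a x) / 2
  else if l = 2 then (det1 0 1 a x + 2 * p * det1 1 1 a x + (1 - 2 * p) * det1 0 0 a x) / 2
  else (det1 0 1 a x + 2 * p * det1 1 0 a x + (1 - 2 * p) * det1 0 0 a x) / 2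

/-- Bob's four deterministic strategies. -/
def bobStrat (l : Fin 4) (b y : Fin 2) : ℝ :=
  if l = 0 then det1 0 0 b y
  else if l = 1 then det1 1 0 b y
  else if l = 2 then det1 0 1 b y
  else det1 1 1 b y

/-- for `p ∈ [0, 1/2]`, the noisy PR box admits a four-valued
local hidden variable decomposition with valid Alice strategies. -/
theorem noisyPR_four_dim_LHV (p : ℝ) (hp0 : 0 ≤ p) (hp1 : p ≤ 1 / 2) :
    (∀ l a x, 0 ≤ aliceStrat p l a x) ∧
    (∀ l x, ∑ a : Fin 2, aliceStrat p l a x = 1) ∧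
    (∀ l b y, 0 ≤ bobStrat l b y) ∧
    (∀ l y, ∑ b : Fin 2, bobStrat l b y = 1) ∧
    (∀ a b x y, noisyPR p a b x y
      = (1 / 4) * ∑ l : Fin 4, aliceStrat p l a x * bobStrat l b y) := by
  refine ⟨?_, ?_, ?_, ?_, ?_⟩
  · intro l a x; fin_cases l <;> fin_cases a <;> fin_cases x <;>
      simp [aliceStrat, det1] <;> linarith
  · intro l x; fin_cases l <;> fin_cases x <;>
      simp [Fin.sum_univ_two, aliceStrat, det1] <;> ring
  · intro l b y; fin_cases l <;> fin_cases b <;> fin_cases y <;>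
      norm_num [bobStrat, det1, Fin.ext_iff] <;> split_ifs <;> norm_num
  · intro l y; fin_cases l <;> fin_cases y <;>
      norm_num [Fin.sum_univ_two, bobStrat, det1] <;> decide
  · intro a b x y; fin_cases a <;> fin_cases b <;> fin_cases x <;> fin_cases y <;>
      simp [Fin.sum_univ_four, noisyPR, aliceStrat, bobStrat, det1] <;> ring
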